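/- Let γ ∈ (0,1) and assume there is a constant C₀ > 0 such that |e_{γ,γ}(ζ)| ≤ C₀/(1+|ζ|), |e_{γ,2γ}(ζ)| ≤ C₀/(1+|ζ|) and |e_{γ,2γ−1}(ζ)| ≤ C₀/(1+|ζ|) for every ζ ∈ ℂ with Re ζ ≤ 0. Then there is a constant C > 0, depending only on γ and C₀, such that for every λ > 0 and every r > 0 the function r ↦ r^{γ−1} e_{γ,γ}(−r^γ λ) is differentiable and | d/dr ( r^{γ−1} e_{γ,γ}(−r^γ λ) ) | ≤ C · r^{γ−2}. -/

import Mathlib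

/-- Two-parameter Mittag-Leffler function `e_{γ,μ}(z) = ∑ₖ zᵏ / Γ(kγ+μ)`,
with the reciprocal Gamma interpreted as `0` at non-positive integers. -/
noncomputable def mlf (γ μ : ℝ) (z : ℂ) : ℂ :=
  ∑' k : ℕ, (Complex.Gamma (((k : ℝ) * γ + μ : ℝ) : ℂ))⁻¹ * z ^ k

/-- Hyperbolic contour `z(y) = b (cosh y + i sinh y)`. -/
noncomputable def zc (b : ℝ) (y : ℂ) : ℂ :=
  (b : ℂ) * (Complex.cosh y + Complex.I * Complex.sinh y)

/-- Derivative of the hyperbolic contour, `z'(y) = b (sinh y + i cosh y)`. -/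
noncomputable def zcDeriv (b : ℝ) (y : ℂ) : ℂ :=
  (b : ℂ) * (Complex.sinh y + Complex.I * Complex.cosh y)


open Complex Real Set Filter Finset

lemma gamma_inv_rec (x : ℂ) : (Complex.Gamma x)⁻¹ = x * (Complex.Gamma (x + 1))⁻¹ := by
  rcases eq_or_ne x 0 with h | h
  · simp [h, Complex.Gamma_zero]
  by_cases hg : Complex.Gamma x = 0
  · obtain ⟨m, hm⟩ := (Complex.Gamma_eq_zero_iff x).mp hg
    have hm1 : 1 ≤ m := by
      rcases Nat.eq_zero_or_pos m with h0 | h0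
      · exfalso; apply h; simp [hm, h0]
      · exact h0
    have : Complex.Gamma (x + 1) = 0 := by
      rw [(Complex.Gamma_eq_zero_iff _)]
      exact ⟨m - 1, by rw [hm]; push_cast [hm1]; ring⟩
    simp [hg, this]
  · rw [Complex.Gamma_add_one x h, mul_inv, ← mul_assoc, mul_inv_cancel₀ h, one_mul]

lemma sum_range_div_mul (g : ℕ → ℝ) (M : ℕ) (hM : 0 < M) (n : ℕ) :
    ∑ k ∈ Finset.range (M * n), g (k / M) = M * ∑ j ∈ Finset.range n, g j := by
  induction n with
  | zero => simp
  | succ n ih =>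
    rw [Nat.mul_succ, Finset.sum_range_add, ih, Finset.sum_range_succ, mul_add]
    congr 1
    have : ∀ i ∈ Finset.range M, g ((M * n + i) / M) = g n := by
      intro i hi
      rw [Nat.mul_add_div hM, Nat.div_eq_of_lt (Finset.mem_range.mp hi), add_zero]
    rw [Finset.sum_congr rfl this, Finset.sum_const, Finset.card_range, nsmul_eq_mul]

lemma summable_comp_div {g : ℕ → ℝ} (hg : Summable g) (h0 : ∀ j, 0 ≤ g j)
    (M : ℕ) (hM : 0 < M) : Summable fun k => g (k / M) := by
  apply summable_of_sum_range_le (c := M * ∑' j, g j) (fun k => h0 _)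
  intro n
  calc ∑ k ∈ Finset.range n, g (k / M)
      ≤ ∑ k ∈ Finset.range (M * n), g (k / M) := by
        apply Finset.sum_le_sum_of_subset_of_nonneg
        · exact Finset.range_subset_range.2 (Nat.le_mul_of_pos_left n hM)
        · intro _ _ _; exact h0 _
    _ = M * ∑ j ∈ Finset.range n, g j := sum_range_div_mul g M hM n
    _ ≤ M * ∑' j, g j := by
        gcongr
        exact Summable.sum_le_tsum _ (fun i _ => h0 i) hg

lemma summable_mlf_aux {γ : ℝ} (hγ0 : 0 < γ) (μ : ℝ) {q : ℝ} (hq : 0 ≤ q) :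
    Summable fun k : ℕ =>
      ((k : ℝ) + 1) * ‖(Complex.Gamma (((k : ℝ) * γ + μ : ℝ) : ℂ))⁻¹‖ * q ^ k := by
  set M : ℕ := ⌈2 / γ⌉₊ + 1 with hM
  have hMpos : 0 < M := Nat.succ_pos _
  have hMγ : 2 / γ ≤ (M : ℝ) := le_of_lt (by
    calc 2 / γ ≤ (⌈2 / γ⌉₊ : ℝ) := Nat.le_ceil _
      _ < M := by push_cast [hM]; linarith)
  set R : ℝ := (2 * (q + 1)) ^ M with hR
  have hq1 : (1 : ℝ) ≤ 2 * (q + 1) := by linarith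
  have hR1 : (1 : ℝ) ≤ R := one_le_pow₀ hq1
  have hgsum : Summable fun j : ℕ => R ^ j / (Nat.factorial j : ℝ) := Real.summable_pow_div_factorial R
  have hgpos : ∀ j : ℕ, 0 ≤ R ^ j / (Nat.factorial j : ℝ) := fun j => by positivity
  have hbig : Summable fun k : ℕ => R * (R ^ (k / M) / (Nat.factorial (k / M) : ℝ)) :=
    (summable_comp_div hgsum hgpos M hMpos).mul_left R
  refine hbig.of_norm_bounded_eventually ?_
  rw [Nat.cofinite_eq_atTop]
  have htend : Tendsto (fun k : ℕ => (k : ℝ) * (γ / 2)) atTop atTop :=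
    tendsto_natCast_atTop_atTop.atTop_mul_const (by positivity)
  filter_upwards [htend.eventually_ge_atTop (2 + (1 + |μ|)), eventually_ge_atTop M]
    with k hk1 hk2
  set d : ℕ := k / M with hd
  have hd1 : 1 ≤ d := (Nat.one_le_div_iff hMpos).mpr hk2
  -- (d : ℝ) ≤ k * (γ/2)
  have hdle : (d : ℝ) ≤ (k : ℝ) * (γ / 2) := by
    have h1 : (d : ℝ) ≤ (k : ℝ) / (M : ℝ) := Nat.cast_div_le
    have h2 : (k : ℝ) / (M : ℝ) ≤ (k : ℝ) * (γ / 2) := by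
      rw [div_le_iff₀ (by exact_mod_cast hMpos)]
      have : 1 ≤ (γ / 2) * M := by
        rw [← div_le_iff₀' (by positivity)]
        calc (1 : ℝ) / (γ / 2) = 2 / γ := by ring
          _ ≤ M := hMγ
      calc (k : ℝ) = (k : ℝ) * 1 := by ring
        _ ≤ (k : ℝ) * ((γ / 2) * M) := by
            apply mul_le_mul_of_nonneg_left this (Nat.cast_nonneg k)
        _ = (k : ℝ) * (γ / 2) * M := by ring
    linarith
  set x : ℝ := (k : ℝ) * γ + μ with hx
  have hxd : (d : ℝ) + 2 ≤ x := by
    have : -|μ| ≤ μ := neg_abs_le μ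
    have hkk : (k : ℝ) * γ = (k : ℝ) * (γ / 2) + (k : ℝ) * (γ / 2) := by ring
    rw [hx, hkk]; linarith
  have hx2 : (2 : ℝ) ≤ x := by
    have : (0 : ℝ) ≤ d := Nat.cast_nonneg d
    linarith
  -- Gamma lower bound
  have hgam : (Nat.factorial d : ℝ) ≤ Real.Gamma x := by
    have h1 : Real.Gamma ((d : ℝ) + 1) = (Nat.factorial d : ℝ) := Real.Gamma_nat_eq_factorial d
    rw [← h1]
    rcases eq_or_lt_of_le (show (d : ℝ) + 1 ≤ x by linarith) with h | h
    · rw [h]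
    · exact le_of_lt (Real.Gamma_strictMonoOn_Ici
        (by simp only [Set.mem_Ici]; exact_mod_cast Nat.succ_le_succ hd1)
        (Set.mem_Ici.mpr hx2) h)
  have hgampos : 0 < Real.Gamma x := Real.Gamma_pos_of_pos (by linarith)
  have hfactpos : (0 : ℝ) < (Nat.factorial d : ℝ) := by exact_mod_cast Nat.factorial_pos d
  -- the estimate
  have habs : ‖(Complex.Gamma ((x : ℝ) : ℂ))⁻¹‖ = (Real.Gamma x)⁻¹ := by
    rw [norm_inv, Complex.Gamma_ofReal, Complex.norm_real, Real.norm_eq_abs, abs_of_pos hgampos]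
  have hterm0 : (0 : ℝ) ≤ ((k : ℝ) + 1) * ‖(Complex.Gamma ((x : ℝ) : ℂ))⁻¹‖ * q ^ k := by
    positivity
  rw [Real.norm_eq_abs, _root_.abs_of_nonneg hterm0, habs]
  have hA : ((k : ℝ) + 1) * (Real.Gamma x)⁻¹ * q ^ k ≤ ((k : ℝ) + 1) * q ^ k / (Nat.factorial d : ℝ) := by
    rw [div_eq_mul_inv, mul_right_comm]
    apply mul_le_mul_of_nonneg_left _ (by positivity)
    exact inv_anti₀ hfactpos hgam
  refine hA.trans ?_
  -- (k+1) q^k ≤ (2(q+1))^k ≤ R^(d+1) = R * R^d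
  have hB : ((k : ℝ) + 1) * q ^ k ≤ (2 * (q + 1)) ^ k := by
    have h1 : ((k : ℝ) + 1) ≤ 2 ^ k := by
      exact_mod_cast Nat.succ_le_of_lt (Nat.lt_two_pow_self (n := k))
    have h2 : q ^ k ≤ (q + 1) ^ k := pow_le_pow_left₀ hq (by linarith) k
    calc ((k : ℝ) + 1) * q ^ k ≤ 2 ^ k * (q + 1) ^ k := by
          apply mul_le_mul h1 h2 (by positivity) (by positivity)
      _ = (2 * (q + 1)) ^ k := (mul_pow _ _ _).symm
  have hC : (2 * (q + 1) : ℝ) ^ k ≤ R ^ (d + 1) := by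
    rw [hR, ← pow_mul]
    apply pow_le_pow_right₀ hq1
    have : k < M * (d + 1) := by
      rw [hd]
      calc k < M * (k / M) + M := by
            have := Nat.div_add_mod k M
            have hmod : k % M < M := Nat.mod_lt k hMpos
            omega
        _ = M * (k / M + 1) := by ring
    omega
  calc ((k : ℝ) + 1) * q ^ k / (Nat.factorial d : ℝ) ≤ (2 * (q + 1)) ^ k / (Nat.factorial d : ℝ) := by gcongr
    _ ≤ R ^ (d + 1) / (Nat.factorial d : ℝ) := by gcongr
    _ = R * (R ^ d / (Nat.factorial d : ℝ)) := by rw [pow_succ]; ring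

lemma summable_mlf_term {γ : ℝ} (hγ0 : 0 < γ) (μ : ℝ) (z : ℂ) :
    Summable fun k : ℕ => (Complex.Gamma (((k : ℝ) * γ + μ : ℝ) : ℂ))⁻¹ * z ^ k := by
  apply Summable.of_norm_bounded
    (summable_mlf_aux hγ0 μ (q := ‖z‖) (norm_nonneg z))
  intro k
  rw [norm_mul, norm_pow]
  have h1 : (1 : ℝ) ≤ (k : ℝ) + 1 := by have : (0:ℝ) ≤ k := Nat.cast_nonneg k; linarith
  nlinarith [norm_nonneg ((Complex.Gamma (((k : ℝ) * γ + μ : ℝ) : ℂ))⁻¹),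
    pow_nonneg (norm_nonneg z) k,
    mul_nonneg (norm_nonneg ((Complex.Gamma (((k : ℝ) * γ + μ : ℝ) : ℂ))⁻¹))
      (pow_nonneg (norm_nonneg z) k)]

/-- `r ↦ r^{γ-1} e_{γ,γ}(-r^γ λ)` is differentiable for every
`r > 0`, with `|d/dr (r^{γ-1} e_{γ,γ}(-r^γ λ))| ≤ C r^{γ-2}`, where `C` depends
only on `γ` and `C₀`. -/
theorem stmt19 (γ C₀ : ℝ) (hγ : γ ∈ Set.Ioo (0 : ℝ) 1) (hC₀ : 0 < C₀)
    (h1 : ∀ ζ : ℂ, ζ.re ≤ 0 → ‖mlf γ γ ζ‖ ≤ C₀ / (1 + ‖ζ‖))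
    (h2 : ∀ ζ : ℂ, ζ.re ≤ 0 →
      ‖mlf γ (2 * γ) ζ‖ ≤ C₀ / (1 + ‖ζ‖))
    (h3 : ∀ ζ : ℂ, ζ.re ≤ 0 →
      ‖mlf γ (2 * γ - 1) ζ‖ ≤ C₀ / (1 + ‖ζ‖)) :
    ∃ C : ℝ, 0 < C ∧ ∀ lam : ℝ, 0 < lam → ∀ r : ℝ, 0 < r →
      DifferentiableAt ℝ
        (fun ρ : ℝ => ((ρ ^ (γ - 1) : ℝ) : ℂ) * mlf γ γ (-((ρ ^ γ * lam : ℝ) : ℂ))) r ∧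
      ‖deriv
          (fun ρ : ℝ => ((ρ ^ (γ - 1) : ℝ) : ℂ) * mlf γ γ (-((ρ ^ γ * lam : ℝ) : ℂ))) r‖
        ≤ C * r ^ (γ - 2) := by
  obtain ⟨hγ0, hγ1⟩ := hγ
  set Cg : ℝ := ‖(Complex.Gamma ((γ - 1 : ℝ) : ℂ))⁻¹‖ with hCg
  refine ⟨C₀ + Cg + 1, by positivity, ?_⟩
  intro lam hlam r hr
  set ζ : ℂ := -((r ^ γ * lam : ℝ) : ℂ) with hζ
  set g : ℕ → ℝ → ℂ := fun k ρ =>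
    (Complex.Gamma (((k : ℝ) * γ + γ : ℝ) : ℂ))⁻¹ * (-(lam : ℂ)) ^ k *
      ((ρ ^ ((k : ℝ) * γ + γ - 1) : ℝ) : ℂ) with hgdef
  set g' : ℕ → ℝ → ℂ := fun k ρ =>
    (Complex.Gamma (((k : ℝ) * γ + γ : ℝ) : ℂ))⁻¹ * (-(lam : ℂ)) ^ k *
      (((((k : ℝ) * γ + γ - 1) * ρ ^ ((k : ℝ) * γ + γ - 2)) : ℝ) : ℂ) with hg'def
  set u : ℕ → ℝ := fun k => (r / 2) ^ (γ - 2) *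
    (((k : ℝ) + 1) * ‖(Complex.Gamma (((k : ℝ) * γ + γ : ℝ) : ℂ))⁻¹‖ *
      (lam * (2 * r) ^ γ) ^ k) with hudef
  have hu_sum : Summable u :=
    (summable_mlf_aux hγ0 γ (by positivity : (0:ℝ) ≤ lam * (2*r)^γ)).mul_left _
  have hr_mem : r ∈ Ioo (r / 2) (2 * r) := ⟨by linarith, by linarith⟩
  -- term-by-term derivative
  have hderiv : ∀ k : ℕ, ∀ y ∈ Ioo (r / 2) (2 * r), HasDerivAt (g k) (g' k y) y := by
    intro k y hy
    have hy0 : (0:ℝ) < y := lt_trans (by linarith) hy.1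
    have h := ((Real.hasDerivAt_rpow_const (x := y) (p := (k : ℝ) * γ + γ - 1)
      (Or.inl hy0.ne')).ofReal_comp).const_mul
      ((Complex.Gamma (((k : ℝ) * γ + γ : ℝ) : ℂ))⁻¹ * (-(lam : ℂ)) ^ k)
    have he : (k : ℝ) * γ + γ - 1 - 1 = (k : ℝ) * γ + γ - 2 := by ring
    rw [he] at h
    exact h
  -- bound on the derivative series
  have hbound : ∀ k : ℕ, ∀ y ∈ Ioo (r / 2) (2 * r), ‖g' k y‖ ≤ u k := by
    intro k y hy
    have hy0 : (0:ℝ) < y := lt_trans (by linarith) hy.1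
    have hnorm : ‖g' k y‖ = ‖(Complex.Gamma (((k : ℝ) * γ + γ : ℝ) : ℂ))⁻¹‖ *
        lam ^ k * (|(k : ℝ) * γ + γ - 1| * ((y ^ γ) ^ k * y ^ (γ - 2))) := by
      have hexp : y ^ ((k : ℝ) * γ + γ - 2) = (y ^ γ) ^ k * y ^ (γ - 2) := by
        rw [show (k : ℝ) * γ + γ - 2 = γ * (k : ℝ) + (γ - 2) by ring, Real.rpow_add hy0,
          Real.rpow_mul hy0.le, Real.rpow_natCast]
      simp only [hg'def, norm_mul, norm_pow, norm_neg, Complex.norm_real,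
        Real.norm_eq_abs]
      rw [abs_of_pos hlam, hexp,
        abs_of_pos (by positivity : (0:ℝ) < (y ^ γ) ^ k * y ^ (γ - 2))]
    rw [hnorm, hudef]
    have hb1 : |(k : ℝ) * γ + γ - 1| ≤ (k : ℝ) + 1 := by
      have hk0 : (0:ℝ) ≤ (k:ℝ) := Nat.cast_nonneg k
      have : (k : ℝ) * γ ≤ (k : ℝ) := by nlinarith
      have h2 : (0:ℝ) ≤ (k : ℝ) * γ := by positivity
      rw [abs_le]; constructor <;> linarith
    have hb2 : y ^ γ ≤ (2 * r) ^ γ := Real.rpow_le_rpow hy0.le (le_of_lt hy.2) hγ0.le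
    have hb3 : y ^ (γ - 2) ≤ (r / 2) ^ (γ - 2) :=
      Real.rpow_le_rpow_of_nonpos (by linarith) (le_of_lt hy.1) (by linarith)
    calc ‖(Complex.Gamma (((k : ℝ) * γ + γ : ℝ) : ℂ))⁻¹‖ * lam ^ k *
          (|(k : ℝ) * γ + γ - 1| * ((y ^ γ) ^ k * y ^ (γ - 2)))
        ≤ ‖(Complex.Gamma (((k : ℝ) * γ + γ : ℝ) : ℂ))⁻¹‖ * lam ^ k *
          (((k : ℝ) + 1) * (((2 * r) ^ γ) ^ k * (r / 2) ^ (γ - 2))) := by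
          gcongr <;> first
            | exact abs_nonneg _
            | exact Real.rpow_nonneg hy0.le γ
            | positivity
            | exact hb1
            | exact hb2
            | exact hb3
      _ = (r / 2) ^ (γ - 2) *
          (((k : ℝ) + 1) * ‖(Complex.Gamma (((k : ℝ) * γ + γ : ℝ) : ℂ))⁻¹‖ *
            (lam * (2 * r) ^ γ) ^ k) := by ring
  -- summability at the point r
  have hg0 : Summable fun k => g k r := by
    apply Summable.of_norm_bounded
      ((summable_mlf_aux hγ0 γ (by positivity : (0:ℝ) ≤ lam * r ^ γ)).mul_left (r ^ (γ - 1)))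
    intro k
    have hexp : r ^ ((k : ℝ) * γ + γ - 1) = (r ^ γ) ^ k * r ^ (γ - 1) := by
      rw [show (k : ℝ) * γ + γ - 1 = γ * (k : ℝ) + (γ - 1) by ring, Real.rpow_add hr,
        Real.rpow_mul hr.le, Real.rpow_natCast]
    simp only [hgdef, norm_mul, norm_pow, norm_neg, Complex.norm_real,
      Real.norm_eq_abs]
    rw [abs_of_pos hlam, hexp, abs_of_pos (by positivity : (0:ℝ) < (r ^ γ) ^ k * r ^ (γ - 1))]
    have hk1 : (1:ℝ) ≤ (k:ℝ) + 1 := by have : (0:ℝ) ≤ (k:ℝ) := Nat.cast_nonneg k; linarith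
    calc ‖(Complex.Gamma (((k : ℝ) * γ + γ : ℝ) : ℂ))⁻¹‖ * lam ^ k *
          ((r ^ γ) ^ k * r ^ (γ - 1))
        ≤ ‖(Complex.Gamma (((k : ℝ) * γ + γ : ℝ) : ℂ))⁻¹‖ * lam ^ k *
          (((k:ℝ)+1) * ((r ^ γ) ^ k * r ^ (γ - 1))) := by
          nlinarith [norm_nonneg ((Complex.Gamma (((k : ℝ) * γ + γ : ℝ) : ℂ))⁻¹),
            pow_nonneg hlam.le k, pow_nonneg (Real.rpow_nonneg hr.le γ) k,
            Real.rpow_nonneg hr.le (γ - 1),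
            mul_nonneg (mul_nonneg (norm_nonneg ((Complex.Gamma (((k : ℝ) * γ + γ : ℝ) : ℂ))⁻¹)) (pow_nonneg hlam.le k)) (mul_nonneg (pow_nonneg (Real.rpow_nonneg hr.le γ) k) (Real.rpow_nonneg hr.le (γ - 1)))]
      _ = r ^ (γ - 1) * (((k:ℝ)+1) *
            ‖(Complex.Gamma (((k : ℝ) * γ + γ : ℝ) : ℂ))⁻¹‖ * (lam * r ^ γ) ^ k) := by
          ring
  have H : HasDerivAt (fun y => ∑' k, g k y) (∑' k, g' k r) r :=
    hasDerivAt_tsum_of_isPreconnected hu_sum isOpen_Ioo isPreconnected_Ioo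
      hderiv hbound hr_mem hg0 hr_mem
  -- the target function agrees with the series near r
  have heq : (fun ρ : ℝ => ((ρ ^ (γ - 1) : ℝ) : ℂ) * mlf γ γ (-((ρ ^ γ * lam : ℝ) : ℂ)))
      =ᶠ[nhds r] fun y => ∑' k, g k y := by
    filter_upwards [isOpen_Ioi.mem_nhds (Set.mem_Ioi.mpr hr)] with ρ hρ
    have hρ0 : (0:ℝ) < ρ := hρ
    rw [mlf, ← tsum_mul_left]
    apply tsum_congr
    intro k
    have hexp : ρ ^ ((k : ℝ) * γ + γ - 1) = (ρ ^ γ) ^ k * ρ ^ (γ - 1) := by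
      rw [show (k : ℝ) * γ + γ - 1 = γ * (k : ℝ) + (γ - 1) by ring, Real.rpow_add hρ0,
        Real.rpow_mul hρ0.le, Real.rpow_natCast]
    simp only [hgdef, hexp]
    push_cast
    ring
  constructor
  · exact H.differentiableAt.congr_of_eventuallyEq heq
  · have hde : deriv (fun ρ : ℝ => ((ρ ^ (γ - 1) : ℝ) : ℂ) * mlf γ γ (-((ρ ^ γ * lam : ℝ) : ℂ))) r
        = ∑' k, g' k r := by
      rw [Filter.EventuallyEq.deriv_eq heq, H.deriv]
    have hval : ∑' k, g' k r = ((r ^ (γ - 2) : ℝ) : ℂ) * mlf γ (γ - 1) ζ := by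
      rw [mlf, ← tsum_mul_left]
      apply tsum_congr
      intro k
      have hexp : r ^ ((k : ℝ) * γ + γ - 2) = (r ^ γ) ^ k * r ^ (γ - 2) := by
        rw [show (k : ℝ) * γ + γ - 2 = γ * (k : ℝ) + (γ - 2) by ring, Real.rpow_add hr,
          Real.rpow_mul hr.le, Real.rpow_natCast]
      have hζ2 : ζ = (-(lam : ℂ)) * ((r ^ γ : ℝ) : ℂ) := by rw [hζ]; push_cast; ring
      rw [show ((k : ℝ) * γ + (γ - 1)) = ((k : ℝ) * γ + γ - 1) from by ring, gamma_inv_rec,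
        show ((((k : ℝ) * γ + γ - 1 : ℝ)) : ℂ) + 1 = (((k : ℝ) * γ + γ : ℝ) : ℂ) from by
          push_cast; ring,
        hζ2, mul_pow]
      simp only [hg'def, hexp]
      push_cast
      ring
    rw [hde, hval]
    have hsummlf : Summable fun k : ℕ =>
        (Complex.Gamma (((k : ℝ) * γ + (γ - 1) : ℝ) : ℂ))⁻¹ * ζ ^ k :=
      summable_mlf_term hγ0 (γ - 1) ζ
    have hζre : ζ.re ≤ 0 := by
      rw [hζ]
      simp only [Complex.neg_re, Complex.ofReal_re, neg_nonpos]
      positivity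
    have hsplit : mlf γ (γ - 1) ζ
        = (Complex.Gamma ((γ - 1 : ℝ) : ℂ))⁻¹ + ζ * mlf γ (2 * γ - 1) ζ := by
      rw [mlf, Summable.tsum_eq_zero_add hsummlf]
      congr 1
      · norm_num
      · rw [mlf, ← tsum_mul_left]
        apply tsum_congr
        intro k
        rw [show (((k + 1 : ℕ) : ℝ) * γ + (γ - 1)) = ((k : ℝ) * γ + (2 * γ - 1)) from by
            push_cast; ring,
          pow_succ]
        ring
    have hbound2 : ‖mlf γ (γ - 1) ζ‖ ≤ Cg + C₀ := by
      rw [hsplit]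
      refine (norm_add_le _ _).trans ?_
      have h3' := h3 ζ hζre
      have hpos : (0 : ℝ) < 1 + ‖ζ‖ := by positivity
      have hzn : (0 : ℝ) ≤ ‖ζ‖ := norm_nonneg ζ
      have h2' : ‖ζ * mlf γ (2 * γ - 1) ζ‖ ≤ C₀ := by
        rw [norm_mul]
        calc ‖ζ‖ * ‖mlf γ (2 * γ - 1) ζ‖
            ≤ ‖ζ‖ * (C₀ / (1 + ‖ζ‖)) := by gcongr
          _ ≤ C₀ := by
              rw [mul_div_assoc', div_le_iff₀ hpos]
              nlinarith
      rw [hCg]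
      linarith
    rw [norm_mul, Complex.norm_real, Real.norm_eq_abs, _root_.abs_of_nonneg (Real.rpow_nonneg hr.le (γ - 2))]
    have hrp : (0 : ℝ) ≤ r ^ (γ - 2) := Real.rpow_nonneg hr.le (γ - 2)
    nlinarith [norm_nonneg (mlf γ (γ - 1) ζ)]
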